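/- Let M be a prime, let χ be a nontrivial Dirichlet character modulo M, let c be a positive integer with gcd(c, M) = 1, let p be an integer with gcd(p, cM) = 1, and let n be any integer. Then ∑_{a mod cM} χ(a) · S(p̄·a, p̄·n; cM) · e_{cM}( −p̄·(a + n) ) = c · g_χ · χ(p·c) · D_χ( r̄·n; M ), where p̄ denotes an integer inverse of p modulo cM and r̄ denotes an integer inverse of p·c modulo M. -/

import Mathlib

open Complex

/-- `eAdd q x = exp(2πi x / q)`. -/
noncomputable def eAdd (q : ℕ) (x : ℤ) : ℂ :=
  Complex.exp (2 * Real.pi * Complex.I * x / q)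

/-- The Kloosterman sum `S(m, n; q) = ∑_{x mod q, (x,q)=1} e_q(m x + n x*)`. -/
noncomputable def klo (m n : ℤ) (q : ℕ) [NeZero q] : ℂ :=
  ∑ x : (ZMod q)ˣ,
    eAdd q (m * ((x : ZMod q).val : ℤ) + n * (((x⁻¹ : (ZMod q)ˣ) : ZMod q).val : ℤ))

/-- The twisted Kloosterman sum `S_ψ(m, n; q)` for a Dirichlet character `ψ` mod `d`, `d ∣ q`. -/
noncomputable def kloTwist {d : ℕ} (ψ : DirichletCharacter ℂ d) (m n : ℤ) (q : ℕ)
    [NeZero q] (h : d ∣ q) : ℂ :=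
  ∑ x : (ZMod q)ˣ,
    ψ (ZMod.castHom h (ZMod d) (x : ZMod q)) *
      eAdd q (m * ((x : ZMod q).val : ℤ) + n * (((x⁻¹ : (ZMod q)ˣ) : ZMod q).val : ℤ))

/-- The Gauss sum `g_χ = ∑_{a mod M} χ(a) e_M(a)`. -/
noncomputable def gaussS {M : ℕ} [NeZero M] (χ : DirichletCharacter ℂ M) : ℂ :=
  ∑ a : ZMod M, χ a * eAdd M (a.val : ℤ)

/-- `D_χ(u; M) = ∑_{b mod M, (b(b−1),M)=1} χ̄(b−1) e_M((b* − 1) u)`. -/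
noncomputable def dSum {M : ℕ} [NeZero M] (χ : DirichletCharacter ℂ M) (u : ℤ) : ℂ :=
  ∑ b ∈ Finset.univ.filter (fun b : ZMod M => Nat.gcd (b * (b - 1)).val M = 1),
    (starRingEnd ℂ) (χ (b - 1)) * eAdd M (((b⁻¹ - 1 : ZMod M).val : ℤ) * u)

lemma eAdd_add (q : ℕ) (x y : ℤ) : eAdd q (x + y) = eAdd q x * eAdd q y := by
  rw [eAdd, eAdd, eAdd, ← Complex.exp_add]
  ring_nf
  push_cast
  ring_nf

lemma eAdd_self_mul (q : ℕ) (hq : q ≠ 0) (k : ℤ) : eAdd q ((q : ℤ) * k) = 1 := by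
  rw [eAdd]
  have : (2 * Real.pi * Complex.I * ((q : ℤ) * k : ℤ) / q) = k * (2 * Real.pi * Complex.I) := by
    have : (q : ℂ) ≠ 0 := by exact_mod_cast hq
    field_simp
    push_cast
    ring
  rw [this, Complex.exp_int_mul_two_pi_mul_I]

lemma eAdd_congr (q : ℕ) (hq : q ≠ 0) {x y : ℤ} (h : (x : ZMod q) = (y : ZMod q)) :
    eAdd q x = eAdd q y := by
  have : (q : ℤ) ∣ x - y := by
    rwa [← ZMod.intCast_zmod_eq_zero_iff_dvd, Int.cast_sub, sub_eq_zero]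
  obtain ⟨k, hk⟩ := this
  have : x = y + q * k := by omega
  rw [this, eAdd_add, eAdd_self_mul q hq, mul_one]

lemma eAdd_mul_left (c M : ℕ) (hc : c ≠ 0) (x : ℤ) : eAdd (c * M) ((c : ℤ) * x) = eAdd M x := by
  unfold eAdd
  congr 1
  have hc' : (c : ℂ) ≠ 0 := by exact_mod_cast hc
  push_cast
  by_cases hM : (M : ℂ) = 0
  · rw [hM, mul_zero, div_zero, div_zero]  -- M = 0 case: both denominators zero? c*M = 0
  · field_simp

lemma eAdd_pow (c : ℕ) (u : ℤ) (t : ℕ) : eAdd c (u * t) = eAdd c u ^ t := by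
  induction t with
  | zero => simp [eAdd]
  | succ k ih =>
    have : u * ((k+1 : ℕ) : ℤ) = u * k + u := by push_cast; ring
    rw [this, eAdd_add, ih, pow_succ]

lemma eAdd_eq_one_iff (c : ℕ) (hc : c ≠ 0) (u : ℤ) : eAdd c u = 1 ↔ (c : ℤ) ∣ u := by
  rw [eAdd, Complex.exp_eq_one_iff]
  constructor
  · rintro ⟨k, hk⟩
    have hc' : (c : ℂ) ≠ 0 := by exact_mod_cast hc
    have hπ : (2 * (Real.pi:ℂ) * Complex.I) ≠ 0 := by
      simp [Real.pi_ne_zero, Complex.I_ne_zero]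
    have : (u : ℂ) = k * c := by
      field_simp at hk
      have := hk
      -- hk : 2 * π * I * u = k * (2 * π * I) * c
      have h2 : (u : ℂ) * (2 * (Real.pi:ℂ) * Complex.I) = (k * c) * (2 * (Real.pi:ℂ) * Complex.I) := by
        ring_nf
        ring_nf at hk
        linear_combination (2 * (Real.pi:ℂ) * Complex.I) * hk
      exact mul_right_cancel₀ hπ h2
    have : u = k * c := by exact_mod_cast this
    exact ⟨k, by rw [this, mul_comm]⟩
  · rintro ⟨k, rfl⟩
    refine ⟨k, ?_⟩
    have hc' : (c : ℂ) ≠ 0 := by exact_mod_cast hc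
    push_cast
    field_simp

lemma sum_eAdd_range (c : ℕ) (hc : c ≠ 0) (u : ℤ) :
    ∑ t ∈ Finset.range c, eAdd c (u * t) = if (c : ℤ) ∣ u then (c : ℂ) else 0 := by
  have hpow : ∀ t : ℕ, eAdd c (u * t) = eAdd c u ^ t := eAdd_pow c u
  by_cases h : (c : ℤ) ∣ u
  · simp only [h, if_true]
    have h1 : eAdd c u = 1 := (eAdd_eq_one_iff c hc u).mpr h
    simp [hpow, h1]
  · simp only [h, if_false]
    have h1 : eAdd c u ≠ 1 := fun hh => h ((eAdd_eq_one_iff c hc u).mp hh)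
    simp only [hpow]
    rw [geom_sum_eq h1 c]
    have : eAdd c u ^ c = 1 := by
      rw [← eAdd_pow]
      rw [mul_comm]
      exact eAdd_self_mul c hc u
    simp [this]

lemma gauss_twist {M : ℕ} [Fact M.Prime] (χ : DirichletCharacter ℂ M) (hχ : χ ≠ 1) (w : ℤ) :
    ∑ b : ZMod M, χ b * eAdd M (w * (b.val : ℤ)) =
      χ ((w : ZMod M))⁻¹ * gaussS χ := by
  have hM : M ≠ 0 := (NeZero.ne M)
  by_cases hw : (w : ZMod M) = 0
  · have h1 : ∀ b : ZMod M, eAdd M (w * (b.val : ℤ)) = eAdd M 0 := by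
      intro b
      apply eAdd_congr M hM
      push_cast
      rw [hw]
      ring
    have h0 : eAdd M (0:ℤ) = 1 := by simp [eAdd]
    simp only [h1, h0, mul_one]
    rw [MulChar.sum_eq_zero_of_ne_one hχ, hw]
    simp [MulChar.map_nonunit χ (not_isUnit_zero)]
  · have hwu : IsUnit (w : ZMod M) := isUnit_iff_ne_zero.mpr hw
    have key : ∀ x : ZMod M,
        χ x * eAdd M (w * (x.val : ℤ)) =
          χ ((w : ZMod M))⁻¹ * (χ ((w : ZMod M) * x) * eAdd M ((((w : ZMod M) * x).val : ℤ))) := by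
      intro x
      rw [map_mul, ← mul_assoc, ← mul_assoc, ← map_mul, inv_mul_cancel₀ hw, map_one, one_mul]
      congr 1
      apply eAdd_congr M hM
      push_cast
      rw [ZMod.natCast_val, ZMod.natCast_val, ZMod.cast_id, ZMod.cast_id]
    rw [gaussS, Finset.mul_sum]
    exact Fintype.sum_bijective (fun b : ZMod M => (w : ZMod M) * b)
      (mulLeft_bijective₀ _ hw) _ _ key
lemma sum_zmod_eq_sum_range {N : ℕ} [NeZero N] (f : ZMod N → ℂ) :
    ∑ a : ZMod N, f a = ∑ j ∈ Finset.range N, f (j : ZMod N) := by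
  apply Finset.sum_bij' (fun (a : ZMod N) (_ : a ∈ Finset.univ) => a.val)
    (fun (j : ℕ) (_ : j ∈ Finset.range N) => (j : ZMod N))
  · intro a _; exact Finset.mem_range.mpr (ZMod.val_lt a)
  · intro j _; exact Finset.mem_univ _
  · intro a _; exact ZMod.natCast_zmod_val a
  · intro j hj; exact ZMod.val_cast_of_lt (Finset.mem_range.mp hj)
  · intro a _; rw [ZMod.natCast_zmod_val a]
lemma sum_range_mul_decomp (c M : ℕ) (f : ℕ → ℂ) :
    ∑ j ∈ Finset.range (c * M), f j
      = ∑ t ∈ Finset.range c, ∑ b ∈ Finset.range M, f (b + M * t) := by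
  rcases Nat.eq_zero_or_pos M with hM | hM
  · subst hM; simp
  rw [← Finset.sum_product']
  apply Finset.sum_bij' (fun (j : ℕ) (_ : j ∈ Finset.range (c*M)) => (j / M, j % M))
    (fun (p : ℕ × ℕ) (_ : p ∈ Finset.range c ×ˢ Finset.range M) => p.2 + M * p.1)
  · intro j hj
    rw [Finset.mem_range] at hj
    rw [Finset.mem_product, Finset.mem_range, Finset.mem_range]
    exact ⟨Nat.div_lt_of_lt_mul (by rw [Nat.mul_comm] at hj; exact hj), Nat.mod_lt _ hM⟩
  · intro p hp
    rw [Finset.mem_product, Finset.mem_range, Finset.mem_range] at hp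
    rw [Finset.mem_range]
    have := hp.1; have := hp.2
    calc p.2 + M * p.1 < M + M * p.1 := by omega
    _ ≤ M * c := by nlinarith
    _ = c * M := by ring
  · intro j _
    exact (Nat.mod_add_div j M)
  · intro p hp
    rw [Finset.mem_product, Finset.mem_range, Finset.mem_range] at hp
    obtain ⟨h1, h2⟩ := hp
    ext
    · simp [Nat.add_mul_div_left _ _ hM, Nat.div_eq_of_lt h2]
    · simp [Nat.add_mul_mod_self_left, Nat.mod_eq_of_lt h2]
  · intro j _
    rw [Nat.mod_add_div j M]

section Inner
variable {M c : ℕ} [Fact M.Prime] [NeZero c]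

lemma sum_zmodM_twist (χ : DirichletCharacter ℂ M) (k : ℤ) :
    ∑ b ∈ Finset.range M, χ ((b : ZMod M)) * eAdd M (k * b)
      = ∑ b : ZMod M, χ b * eAdd M (k * (b.val : ℤ)) := by
  rw [sum_zmod_eq_sum_range (fun b : ZMod M => χ b * eAdd M (k * (b.val : ℤ)))]
  apply Finset.sum_congr rfl
  intro j _
  congr 1
  apply eAdd_congr M (NeZero.ne M)
  push_cast
  rw [ZMod.natCast_val, ZMod.cast_id]

lemma innerKSum (χ : DirichletCharacter ℂ M) (hχ : χ ≠ 1) (u : ℤ) :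
    ∑ a : ZMod (c * M),
        χ (ZMod.castHom (dvd_mul_left M c) (ZMod M) a) * eAdd (c * M) (u * (a.val : ℤ))
      = if (c : ℤ) ∣ u then
          (c : ℂ) * (χ (((u / c : ℤ) : ZMod M))⁻¹ * gaussS χ) else 0 := by
  have hM : M ≠ 0 := NeZero.ne M
  have hc : c ≠ 0 := NeZero.ne c
  haveI : NeZero (c * M) := ⟨Nat.mul_ne_zero hc hM⟩
  rw [sum_zmod_eq_sum_range
    (fun a : ZMod (c*M) => χ (ZMod.castHom (dvd_mul_left M c) (ZMod M) a) * eAdd (c * M) (u * (a.val : ℤ)))]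
  have step1 : ∀ j : ℕ,
      χ (ZMod.castHom (dvd_mul_left M c) (ZMod M) ((j : ZMod (c*M)))) *
          eAdd (c * M) (u * (((j : ZMod (c*M)).val : ℤ)))
        = χ ((j : ZMod M)) * eAdd (c*M) (u * j) := by
    intro j
    rw [map_natCast]
    congr 1
    apply eAdd_congr _ (Nat.mul_ne_zero hc hM)
    push_cast
    rw [ZMod.natCast_val, ZMod.cast_id]
  simp only [step1]
  rw [sum_range_mul_decomp c M (fun j => χ ((j : ZMod M)) * eAdd (c*M) (u * j))]
  have step2 : ∀ t ∈ Finset.range c, ∀ b ∈ Finset.range M,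
      χ (((b + M * t : ℕ) : ZMod M)) * eAdd (c*M) (u * ((b + M * t : ℕ) : ℤ))
        = eAdd c (u * t) * (χ ((b : ZMod M)) * eAdd (c*M) (u * b)) := by
    intro t _ b _
    have h1 : ((b + M * t : ℕ) : ZMod M) = (b : ZMod M) := by
      push_cast
      simp [ZMod.natCast_self]
    have h2 : eAdd (c*M) (u * ((b + M * t : ℕ) : ℤ)) = eAdd (c*M) (u * b) * eAdd c (u * t) := by
      have : u * ((b + M * t : ℕ) : ℤ) = u * b + (M : ℤ) * (u * t) := by push_cast; ring
      rw [this, eAdd_add]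
      congr 1
      rw [Nat.mul_comm c M]
      exact eAdd_mul_left M c hM (u * t)
    rw [h1, h2]
    ring
  rw [Finset.sum_congr rfl (fun t ht => Finset.sum_congr rfl (fun b hb => step2 t ht b hb))]
  simp only [← Finset.mul_sum]
  rw [← Finset.sum_mul, sum_eAdd_range c hc u]
  by_cases hdvd : (c : ℤ) ∣ u
  · simp only [hdvd, if_true]
    obtain ⟨k, hk⟩ := hdvd
    have hk' : u / c = k := by rw [hk]; exact Int.mul_ediv_cancel_left k (by exact_mod_cast hc)
    have step3 : ∀ b ∈ Finset.range M,
        χ ((b : ZMod M)) * eAdd (c*M) (u * b) = χ ((b : ZMod M)) * eAdd M (k * b) := by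
      intro b _
      congr 1
      have : u * (b : ℤ) = (c : ℤ) * (k * b) := by rw [hk]; ring
      rw [this]
      exact eAdd_mul_left c M hc (k * b)
    rw [Finset.sum_congr rfl step3, sum_zmodM_twist χ k, gauss_twist χ hχ k, hk']
  · simp [hdvd]

end Inner

open Complex

noncomputable def crtE {c M : ℕ} [NeZero c] [NeZero M] (hc : Nat.Coprime c M) :
    (ZMod (c*M))ˣ ≃* (ZMod c)ˣ × (ZMod M)ˣ :=
  (Units.mapEquiv (ZMod.chineseRemainder hc).toMulEquiv).trans MulEquiv.prodUnits

section CRT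
variable {c M : ℕ} [NeZero c] [NeZero M] (hc : Nat.Coprime c M)

lemma crt_pair (z : ZMod (c*M)) :
    ZMod.chineseRemainder hc z = (ZMod.cast z, ZMod.cast z) := by
  have h1 : ZMod.chineseRemainder hc z
      = ZMod.castHom (show Nat.lcm c M ∣ c * M by simp [Nat.lcm_dvd_iff]) (ZMod c × ZMod M) z := rfl
  rw [h1, ZMod.castHom_apply]
  exact Prod.ext (Prod.fst_zmod_cast _) (Prod.snd_zmod_cast _)

lemma crtE_fst (x : (ZMod (c*M))ˣ) :
    ((crtE hc x).1 : ZMod c) = (((x : ZMod (c*M)).val : ZMod c)) := by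
  have h0 : ((crtE hc x).1 : ZMod c) = (ZMod.chineseRemainder hc (x : ZMod (c*M))).1 := rfl
  rw [h0, crt_pair, ← ZMod.natCast_val]

lemma crtE_snd (x : (ZMod (c*M))ˣ) :
    ((crtE hc x).2 : ZMod M) = (((x : ZMod (c*M)).val : ZMod M)) := by
  have h0 : ((crtE hc x).2 : ZMod M) = (ZMod.chineseRemainder hc (x : ZMod (c*M))).2 := rfl
  rw [h0, crt_pair]
  exact (ZMod.natCast_val _).symm
end CRT

lemma dSum_units {M : ℕ} [Fact M.Prime] (χ : DirichletCharacter ℂ M) (u : ℤ) :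
    dSum χ u = ∑ β : (ZMod M)ˣ,
      (starRingEnd ℂ) (χ ((β : ZMod M) - 1)) *
        eAdd M ((((β : ZMod M)⁻¹ - 1 : ZMod M).val : ℤ) * u) := by
  classical
  have hfilt : Finset.univ.filter (fun b : ZMod M => Nat.gcd (b * (b - 1)).val M = 1)
      = Finset.univ.filter (fun b : ZMod M => IsUnit b ∧ IsUnit (b - 1)) := by
    apply Finset.filter_congr
    intro b _
    have h1 : IsUnit (((b * (b - 1)).val : ℕ) : ZMod M) ↔ Nat.Coprime (b * (b - 1)).val M :=
      ZMod.isUnit_iff_coprime _ M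
    rw [ZMod.natCast_zmod_val, IsUnit.mul_iff] at h1
    exact Iff.trans (Iff.of_eq rfl) h1.symm
  have hss : Finset.univ.filter (fun b : ZMod M => IsUnit b ∧ IsUnit (b - 1))
      ⊆ Finset.univ.filter (fun b : ZMod M => IsUnit b) := by
    intro b hb
    simp only [Finset.mem_filter, Finset.mem_univ, true_and] at hb ⊢
    exact hb.1
  have hsub : ∀ b ∈ Finset.univ.filter (fun b : ZMod M => IsUnit b),
      b ∉ Finset.univ.filter (fun b : ZMod M => IsUnit b ∧ IsUnit (b - 1)) →
      (starRingEnd ℂ) (χ (b - 1)) * eAdd M (((b⁻¹ - 1 : ZMod M).val : ℤ) * u) = 0 := by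
    intro b hb hnb
    simp only [Finset.mem_filter, Finset.mem_univ, true_and] at hb hnb
    have : ¬ IsUnit (b - 1) := fun h => hnb ⟨hb, h⟩
    rw [χ.map_nonunit this, map_zero, zero_mul]
  rw [dSum, hfilt, Finset.sum_subset hss hsub]
  symm
  apply Finset.sum_bij (fun (β : (ZMod M)ˣ) (_ : β ∈ Finset.univ) => (β : ZMod M))
  · intro β _
    simp [Units.isUnit]
  · intro β₁ _ β₂ _ h
    exact Units.ext h
  · intro b hb
    simp only [Finset.mem_filter, Finset.mem_univ, true_and] at hb
    exact ⟨hb.unit, Finset.mem_univ _, rfl⟩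
  · intro β _
    rfl


/-- Evaluation of the full character sum modulo `cM`. -/
theorem stmt_4 (M : ℕ) [Fact M.Prime] (χ : DirichletCharacter ℂ M) (hχ : χ ≠ 1)
    (c : ℕ) [NeZero c] (hc : Nat.gcd c M = 1)
    (p : ℤ) (hp : Int.gcd p (c * M : ℕ) = 1) (n : ℤ)
    (pbar : ℤ) (hpbar : ((p * pbar : ℤ) : ZMod (c * M)) = 1)
    (rbar : ℤ) (hrbar : ((p * (c : ℤ) * rbar : ℤ) : ZMod M) = 1) :
    ∑ a : ZMod (c * M),
        χ (ZMod.castHom (dvd_mul_left M c) (ZMod M) a) *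
          klo (pbar * (a.val : ℤ)) (pbar * n) (c * M) *
          eAdd (c * M) (-(pbar * ((a.val : ℤ) + n))) =
      (c : ℂ) * gaussS χ * χ (((p * (c : ℤ) : ℤ) : ZMod M)) * dSum χ (rbar * n) := by
  classical
  have hMp : M.Prime := Fact.out
  haveI : NeZero M := ⟨hMp.ne_zero⟩
  have hcne : c ≠ 0 := NeZero.ne c
  have hMne : M ≠ 0 := NeZero.ne M
  have hNne : c * M ≠ 0 := Nat.mul_ne_zero hcne hMne
  haveI : NeZero (c * M) := ⟨hNne⟩
  have hcop : Nat.Coprime c M := hc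
  -- unit facts
  have hpbar_c : (p : ZMod c) * (pbar : ZMod c) = 1 := by
    have h := congrArg (ZMod.castHom (dvd_mul_right c M) (ZMod c)) hpbar
    rw [map_intCast, map_one] at h
    push_cast at h
    exact h
  have hpbar_M : (p : ZMod M) * (pbar : ZMod M) = 1 := by
    have h := congrArg (ZMod.castHom (dvd_mul_left M c) (ZMod M)) hpbar
    rw [map_intCast, map_one] at h
    push_cast at h
    exact h
  have hpc_M : ((p * (c : ℤ) : ℤ) : ZMod M) * ((rbar : ℤ) : ZMod M) = 1 := by
    rw [← Int.cast_mul, hrbar]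
  -- Step 1: expand and reduce to a sum over units
  have step1 : ∑ a : ZMod (c * M),
        χ (ZMod.castHom (dvd_mul_left M c) (ZMod M) a) *
          klo (pbar * (a.val : ℤ)) (pbar * n) (c * M) *
          eAdd (c * M) (-(pbar * ((a.val : ℤ) + n)))
      = ∑ x : (ZMod (c*M))ˣ,
          eAdd (c*M) (pbar * n * ((((x⁻¹ : (ZMod (c*M))ˣ) : ZMod (c*M)).val : ℤ) - 1)) *
            (∑ a : ZMod (c*M),
              χ (ZMod.castHom (dvd_mul_left M c) (ZMod M) a) *
                eAdd (c*M) ((pbar * (((x : ZMod (c*M)).val : ℤ) - 1)) * (a.val : ℤ))) := by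
    simp only [klo, Finset.mul_sum, Finset.sum_mul]
    rw [Finset.sum_comm]
    apply Finset.sum_congr rfl
    intro x _
    apply Finset.sum_congr rfl
    intro a _
    rw [mul_assoc, ← eAdd_add]
    have harg : pbar * (a.val : ℤ) * (((x : ZMod (c*M)) : ZMod (c*M)).val : ℤ)
          + pbar * n * (((x⁻¹ : (ZMod (c*M))ˣ) : ZMod (c*M)).val : ℤ)
          + -(pbar * ((a.val : ℤ) + n))
        = pbar * n * ((((x⁻¹ : (ZMod (c*M))ˣ) : ZMod (c*M)).val : ℤ) - 1)
          + (pbar * (((x : ZMod (c*M)).val : ℤ) - 1)) * (a.val : ℤ) := by ring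
    rw [harg, eAdd_add]
    ring
  rw [step1]
  have step2 : ∀ x : (ZMod (c*M))ˣ,
      (∑ a : ZMod (c*M),
        χ (ZMod.castHom (dvd_mul_left M c) (ZMod M) a) *
          eAdd (c*M) ((pbar * (((x : ZMod (c*M)).val : ℤ) - 1)) * (a.val : ℤ)))
      = if (c : ℤ) ∣ pbar * (((x : ZMod (c*M)).val : ℤ) - 1) then
          (c : ℂ) * (χ (((pbar * (((x : ZMod (c*M)).val : ℤ) - 1) / (c:ℤ) : ℤ) : ZMod M))⁻¹ *
            gaussS χ) else 0 :=
    fun x => innerKSum χ hχ _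
  simp only [step2]
  -- now a sum over units x of F x
  have hdvd_iff : ∀ x : (ZMod (c*M))ˣ,
      ((c:ℤ) ∣ pbar * (((x : ZMod (c*M)).val : ℤ) - 1)) ↔ (crtE hcop x).1 = 1 := by
    intro x
    rw [← ZMod.intCast_zmod_eq_zero_iff_dvd]
    have hcast : ((pbar * (((x : ZMod (c*M)).val : ℤ) - 1) : ℤ) : ZMod c)
        = (pbar : ZMod c) * (((crtE hcop x).1 : ZMod c) - 1) := by
      push_cast
      rw [crtE_fst hcop x]
    rw [hcast]
    constructor
    · intro h
      have h2 := congrArg (fun z => (p : ZMod c) * z) h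
      simp only [mul_zero] at h2
      rw [← mul_assoc, hpbar_c, one_mul] at h2
      rw [sub_eq_zero] at h2
      exact Units.ext (h2.trans Units.val_one.symm)
    · intro h
      rw [h, Units.val_one, sub_self, mul_zero]
  have hmain : ∀ β : (ZMod M)ˣ,
      (fun x : (ZMod (c*M))ˣ =>
        eAdd (c*M) (pbar * n * ((((x⁻¹ : (ZMod (c*M))ˣ) : ZMod (c*M)).val : ℤ) - 1)) *
          (if (c : ℤ) ∣ pbar * (((x : ZMod (c*M)).val : ℤ) - 1) then
            (c : ℂ) * (χ (((pbar * (((x : ZMod (c*M)).val : ℤ) - 1) / (c:ℤ) : ℤ) : ZMod M))⁻¹ *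
              gaussS χ) else 0)) ((crtE hcop).symm (1, β))
      = (c : ℂ) * gaussS χ * χ (((p * (c : ℤ) : ℤ) : ZMod M)) *
          ((starRingEnd ℂ) (χ ((β : ZMod M) - 1)) *
            eAdd M ((((β : ZMod M)⁻¹ - 1 : ZMod M).val : ℤ) * (rbar * n))) := by
    intro β
    simp only
    have hx : crtE hcop ((crtE hcop).symm (1, β)) = (1, β) := MulEquiv.apply_symm_apply _ _
    set x : (ZMod (c*M))ˣ := (crtE hcop).symm (1, β) with hxdef
    have hx2 : (((x : ZMod (c*M)).val : ZMod M)) = (β : ZMod M) := by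
      rw [← crtE_snd hcop x, hx]
    have hxinv : crtE hcop (x⁻¹) = (1, β⁻¹) := by
      rw [map_inv, hx]
      rfl
    have hxi1 : (((x⁻¹ : (ZMod (c*M))ˣ) : ZMod (c*M)).val : ZMod c) = 1 := by
      rw [← crtE_fst hcop (x⁻¹), hxinv, Units.val_one]
    have hxi2 : (((x⁻¹ : (ZMod (c*M))ˣ) : ZMod (c*M)).val : ZMod M) = ((β : ZMod M))⁻¹ := by
      rw [← crtE_snd hcop (x⁻¹), hxinv]
      exact Units.val_inv_eq_inv_val β
    have hdv : (c:ℤ) ∣ pbar * (((x : ZMod (c*M)).val : ℤ) - 1) := by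
      rw [hdvd_iff, hx]
    have hk : (c:ℤ) * (pbar * (((x : ZMod (c*M)).val : ℤ) - 1) / (c:ℤ))
        = pbar * (((x : ZMod (c*M)).val : ℤ) - 1) := Int.mul_ediv_cancel' hdv
    have hkM : ((p * (c:ℤ) : ℤ) : ZMod M) *
          (((pbar * (((x : ZMod (c*M)).val : ℤ) - 1) / (c:ℤ) : ℤ)) : ZMod M)
        = (β : ZMod M) - 1 := by
      have h1 := congrArg (fun t : ℤ => ((t : ZMod M))) hk
      push_cast at h1
      rw [hx2] at h1
      push_cast
      linear_combination (p : ZMod M) * h1 + ((β : ZMod M) - 1) * hpbar_M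
    have hchi : χ ((((pbar * (((x : ZMod (c*M)).val : ℤ) - 1) / (c:ℤ) : ℤ) : ZMod M))⁻¹)
        = χ (((p * (c:ℤ) : ℤ) : ZMod M)) * (starRingEnd ℂ) (χ ((β : ZMod M) - 1)) := by
      by_cases hβ : (β : ZMod M) = 1
      · have hpcu : IsUnit (((p * (c:ℤ) : ℤ) : ZMod M)) := IsUnit.of_mul_eq_one _ hpc_M
        have hk0 : (((pbar * (((x : ZMod (c*M)).val : ℤ) - 1) / (c:ℤ) : ℤ)) : ZMod M) = 0 := by
          have h0 : ((p * (c:ℤ) : ℤ) : ZMod M) *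
              (((pbar * (((x : ZMod (c*M)).val : ℤ) - 1) / (c:ℤ) : ℤ)) : ZMod M) = 0 := by
            rw [hkM, hβ, sub_self]
          exact (IsUnit.mul_right_eq_zero hpcu).mp h0
        rw [hk0, hβ, sub_self, inv_zero]
        rw [χ.map_nonunit not_isUnit_zero, map_zero, mul_zero]
      · have hβ0 : ((β : ZMod M) - 1) ≠ 0 := sub_ne_zero.mpr hβ
        have hpc0 : (((p * (c:ℤ) : ℤ) : ZMod M)) ≠ 0 := by
          intro h0
          rw [h0, zero_mul] at hpc_M
          exact zero_ne_one hpc_M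
        have hvne : (((pbar * (((x : ZMod (c*M)).val : ℤ) - 1) / (c:ℤ) : ℤ)) : ZMod M) ≠ 0 := by
          intro h0
          rw [h0, mul_zero] at hkM
          exact hβ0 hkM.symm
        have hvinv : (((pbar * (((x : ZMod (c*M)).val : ℤ) - 1) / (c:ℤ) : ℤ)) : ZMod M)⁻¹
            = (((p * (c:ℤ) : ℤ) : ZMod M)) * ((β : ZMod M) - 1)⁻¹ := by
          apply inv_eq_of_mul_eq_one_right
          rw [show (((pbar * (((x : ZMod (c*M)).val : ℤ) - 1) / (c:ℤ) : ℤ)) : ZMod M) *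
              ((((p * (c:ℤ) : ℤ) : ZMod M)) * ((β : ZMod M) - 1)⁻¹)
            = (((p * (c:ℤ) : ℤ) : ZMod M) *
                (((pbar * (((x : ZMod (c*M)).val : ℤ) - 1) / (c:ℤ) : ℤ)) : ZMod M)) *
                ((β : ZMod M) - 1)⁻¹ from by ring, hkM, mul_inv_cancel₀ hβ0]
        rw [hvinv, map_mul]
        congr 1
        have h1 : χ (((β : ZMod M) - 1)⁻¹) * χ ((β : ZMod M) - 1) = 1 := by
          rw [← map_mul, inv_mul_cancel₀ hβ0, map_one]
        have hβu : IsUnit ((β : ZMod M) - 1) := isUnit_iff_ne_zero.mpr hβ0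
        have hconj : (starRingEnd ℂ) (χ ((β : ZMod M) - 1)) = (χ ((β : ZMod M) - 1))⁻¹ := by
          have hn : ‖χ ((β : ZMod M) - 1)‖ = 1 := by
            have h := DirichletCharacter.unit_norm_eq_one χ hβu.unit
            rw [IsUnit.unit_spec] at h
            exact h
          exact (Complex.inv_eq_conj hn).symm
        rw [hconj]
        exact eq_inv_of_mul_eq_one_left h1
    have hcdvd2 : (c:ℤ) ∣ (((x⁻¹ : (ZMod (c*M))ˣ) : ZMod (c*M)).val : ℤ) - 1 := by
      rw [← ZMod.intCast_zmod_eq_zero_iff_dvd]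
      push_cast
      rw [hxi1, sub_self]
    obtain ⟨m, hm⟩ := hcdvd2
    have he : eAdd (c*M) (pbar * n * ((((x⁻¹ : (ZMod (c*M))ˣ) : ZMod (c*M)).val : ℤ) - 1))
        = eAdd M ((((β : ZMod M)⁻¹ - 1 : ZMod M).val : ℤ) * (rbar * n)) := by
      rw [hm]
      have harr : pbar * n * ((c:ℤ) * m) = (c:ℤ) * (pbar * n * m) := by ring
      rw [harr, eAdd_mul_left c M hcne]
      apply eAdd_congr M hMne
      have hmM : (c : ZMod M) * ((m:ℤ) : ZMod M) = (β : ZMod M)⁻¹ - 1 := by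
        have h1 := congrArg (fun t : ℤ => ((t : ZMod M))) hm
        push_cast at h1
        rw [hxi2] at h1
        linear_combination -h1
      have hpbarM' : ((pbar : ℤ) : ZMod M) = (c : ZMod M) * ((rbar:ℤ) : ZMod M) := by
        have hthis := hpc_M
        push_cast at hthis
        linear_combination (-((pbar : ℤ) : ZMod M)) * hthis +
          ((c : ZMod M) * ((rbar:ℤ) : ZMod M)) * hpbar_M
      push_cast
      rw [ZMod.natCast_val, ZMod.cast_id]
      linear_combination ((n : ZMod M) * ((m:ℤ) : ZMod M)) * hpbarM' +
        (((rbar:ℤ) : ZMod M) * (n : ZMod M)) * hmM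
    rw [if_pos hdv, he]
    linear_combination (eAdd M ((((β : ZMod M)⁻¹ - 1 : ZMod M).val : ℤ) * (rbar * n)) *
      (c : ℂ) * gaussS χ) * hchi
  have hvanish : ∀ s ∈ (Finset.univ : Finset (ZMod c)ˣ), s ≠ 1 →
      (∑ β : (ZMod M)ˣ,
        (fun x : (ZMod (c*M))ˣ =>
          eAdd (c*M) (pbar * n * ((((x⁻¹ : (ZMod (c*M))ˣ) : ZMod (c*M)).val : ℤ) - 1)) *
            (if (c : ℤ) ∣ pbar * (((x : ZMod (c*M)).val : ℤ) - 1) then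
              (c : ℂ) * (χ (((pbar * (((x : ZMod (c*M)).val : ℤ) - 1) / (c:ℤ) : ℤ) : ZMod M))⁻¹ *
                gaussS χ) else 0)) ((crtE hcop).symm (s, β))) = 0 := by
    intro s _ hs
    apply Finset.sum_eq_zero
    intro β _
    simp only
    have hx : crtE hcop ((crtE hcop).symm (s, β)) = (s, β) := MulEquiv.apply_symm_apply _ _
    rw [if_neg, mul_zero]
    intro hdv
    apply hs
    have h1 := (hdvd_iff _).mp hdv
    rw [hx] at h1
    exact h1
  calc ∑ x : (ZMod (c*M))ˣ,
        eAdd (c*M) (pbar * n * ((((x⁻¹ : (ZMod (c*M))ˣ) : ZMod (c*M)).val : ℤ) - 1)) *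
          (if (c : ℤ) ∣ pbar * (((x : ZMod (c*M)).val : ℤ) - 1) then
            (c : ℂ) * (χ (((pbar * (((x : ZMod (c*M)).val : ℤ) - 1) / (c:ℤ) : ℤ) : ZMod M))⁻¹ *
              gaussS χ) else 0)
      = ∑ q : (ZMod c)ˣ × (ZMod M)ˣ,
          (fun x : (ZMod (c*M))ˣ =>
            eAdd (c*M) (pbar * n * ((((x⁻¹ : (ZMod (c*M))ˣ) : ZMod (c*M)).val : ℤ) - 1)) *
              (if (c : ℤ) ∣ pbar * (((x : ZMod (c*M)).val : ℤ) - 1) then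
                (c : ℂ) * (χ (((pbar * (((x : ZMod (c*M)).val : ℤ) - 1) / (c:ℤ) : ℤ) : ZMod M))⁻¹ *
                  gaussS χ) else 0)) ((crtE hcop).symm q) := by
        apply Fintype.sum_equiv (crtE hcop).toEquiv
        intro x
        simp only [MulEquiv.toEquiv_eq_coe, EquivLike.coe_coe]
        rw [MulEquiv.symm_apply_apply]
    _ = ∑ s : (ZMod c)ˣ, ∑ β : (ZMod M)ˣ,
          (fun x : (ZMod (c*M))ˣ =>
            eAdd (c*M) (pbar * n * ((((x⁻¹ : (ZMod (c*M))ˣ) : ZMod (c*M)).val : ℤ) - 1)) *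
              (if (c : ℤ) ∣ pbar * (((x : ZMod (c*M)).val : ℤ) - 1) then
                (c : ℂ) * (χ (((pbar * (((x : ZMod (c*M)).val : ℤ) - 1) / (c:ℤ) : ℤ) : ZMod M))⁻¹ *
                  gaussS χ) else 0)) ((crtE hcop).symm (s, β)) := Fintype.sum_prod_type _
    _ = ∑ β : (ZMod M)ˣ,
          (fun x : (ZMod (c*M))ˣ =>
            eAdd (c*M) (pbar * n * ((((x⁻¹ : (ZMod (c*M))ˣ) : ZMod (c*M)).val : ℤ) - 1)) *
              (if (c : ℤ) ∣ pbar * (((x : ZMod (c*M)).val : ℤ) - 1) then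
                (c : ℂ) * (χ (((pbar * (((x : ZMod (c*M)).val : ℤ) - 1) / (c:ℤ) : ℤ) : ZMod M))⁻¹ *
                  gaussS χ) else 0)) ((crtE hcop).symm (1, β)) :=
        Finset.sum_eq_single_of_mem 1 (Finset.mem_univ _) hvanish
    _ = ∑ β : (ZMod M)ˣ,
          (c : ℂ) * gaussS χ * χ (((p * (c : ℤ) : ℤ) : ZMod M)) *
            ((starRingEnd ℂ) (χ ((β : ZMod M) - 1)) *
              eAdd M ((((β : ZMod M)⁻¹ - 1 : ZMod M).val : ℤ) * (rbar * n))) :=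
        Finset.sum_congr rfl (fun β _ => hmain β)
    _ = (c : ℂ) * gaussS χ * χ (((p * (c : ℤ) : ℤ) : ZMod M)) * dSum χ (rbar * n) := by
        rw [dSum_units χ (rbar * n), Finset.mul_sum]
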